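/- For a sequence s of positive integers with s_1 ≥ 2 and each s_i ≥ 1, the multiple zeta value Ze^s = Σ_{0 < n_r < ... < n_1} ∏ n_i^{-s_i} satisfies 0 ≤ Ze^s ≤ 2. -/

import Mathlib

open Finset

/-- Nested finite sum approximating a multiple zeta value. -/
noncomputable def mzvF : List ℕ → ℕ → ℝ
  | [], _ => 1
  | s :: l, N => ∑ n ∈ Finset.Icc 1 N, ((n : ℝ) ^ s)⁻¹ * mzvF l (n - 1)

lemma mzvF_cons (s : ℕ) (l : List ℕ) (N : ℕ) :
    mzvF (s :: l) N = ∑ n ∈ Finset.Icc 1 N, ((n : ℝ) ^ s)⁻¹ * mzvF l (n - 1) := rfl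

lemma mzvF_nonneg : ∀ (l : List ℕ) (N : ℕ), 0 ≤ mzvF l N := by
  intro l
  induction l with
  | nil => intro N; simp [mzvF]
  | cons s l ih =>
    intro N
    exact Finset.sum_nonneg fun n _ => mul_nonneg (by positivity) (ih _)

/-- Telescoping bound `∑_{n=m+1}^{m+k} 1/n² ≤ 1/m - 1/(m+k)`. -/
lemma sum_sq_inv_telescope (m : ℕ) (hm : 1 ≤ m) :
    ∀ k : ℕ, ∑ n ∈ Finset.Icc (m + 1) (m + k), (((n : ℝ)) ^ 2)⁻¹
      ≤ (m : ℝ)⁻¹ - ((m + k : ℕ) : ℝ)⁻¹ := by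
  intro k
  induction k with
  | zero => simp
  | succ k ih =>
    rw [show m + (k + 1) = (m + k) + 1 from rfl,
      Finset.sum_Icc_succ_top (by omega)]
    have ha : (1 : ℝ) ≤ (m + k : ℕ) := by exact_mod_cast Nat.one_le_iff_ne_zero.mpr (by omega)
    set a : ℝ := ((m + k : ℕ) : ℝ) with haa
    have hstep : (((m + k + 1 : ℕ) : ℝ) ^ 2)⁻¹ ≤ a⁻¹ - (((m + k + 1 : ℕ) : ℝ))⁻¹ := by
      have hc : ((m + k + 1 : ℕ) : ℝ) = a + 1 := by push_cast [haa]; ring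
      rw [hc]
      have h0 : (0 : ℝ) < a := by linarith
      have h1 : (0 : ℝ) < a + 1 := by linarith
      rw [inv_sub_inv (ne_of_gt h0) (ne_of_gt h1), div_eq_mul_inv,
        show a + 1 - a = 1 from by ring, one_mul]
      apply inv_anti₀ (by positivity)
      nlinarith
    have := add_le_add ih hstep
    push_cast at this ⊢
    linarith

lemma sum_pow_inv_le (m s : ℕ) (hm : 1 ≤ m) (hs : 2 ≤ s) (N : ℕ) :
    ∑ n ∈ Finset.Icc (m + 1) N, ((n : ℝ) ^ s)⁻¹ ≤ (m : ℝ)⁻¹ := by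
  have h1 : ∑ n ∈ Finset.Icc (m + 1) N, ((n : ℝ) ^ s)⁻¹
      ≤ ∑ n ∈ Finset.Icc (m + 1) N, ((n : ℝ) ^ 2)⁻¹ := by
    apply Finset.sum_le_sum
    intro n hn
    have hn1 : 1 ≤ n := by have := (Finset.mem_Icc.mp hn).1; omega
    have h1n : (1 : ℝ) ≤ (n : ℝ) := by exact_mod_cast hn1
    exact inv_anti₀ (by positivity) (pow_le_pow_right₀ h1n hs)
  rcases le_or_gt N m with h | h
  · rw [Finset.Icc_eq_empty (show ¬ m + 1 ≤ N by omega), Finset.sum_empty]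
    positivity
  · obtain ⟨k, rfl⟩ : ∃ k, N = m + k := ⟨N - m, by omega⟩
    refine h1.trans ((sum_sq_inv_telescope m hm k).trans ?_)
    have : (0:ℝ) ≤ ((m + k : ℕ) : ℝ)⁻¹ := by positivity
    linarith

/-- Exchanging a nested triangular sum. -/
lemma sum_swap_tri (N : ℕ) (g : ℕ → ℕ → ℝ) :
    ∑ n ∈ Finset.Icc 1 N, ∑ m ∈ Finset.Icc 1 (n - 1), g n m
      = ∑ m ∈ Finset.Icc 1 N, ∑ n ∈ Finset.Icc (m + 1) N, g n m := by
  rw [show Finset.Icc 1 N = Finset.Ico 1 (N+1) from (Finset.Ico_add_one_right_eq_Icc 1 N).symm]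
  calc ∑ n ∈ Finset.Ico 1 (N+1), ∑ m ∈ Finset.Icc 1 (n - 1), g n m
      = ∑ n ∈ Finset.Ico 1 (N+1), ∑ m ∈ Finset.Ico 1 n, g n m := by
        refine Finset.sum_congr rfl fun n hn => ?_
        have h1 : 1 ≤ n := (Finset.mem_Ico.mp hn).1
        refine Finset.sum_congr ?_ fun _ _ => rfl
        ext x
        simp only [Finset.mem_Icc, Finset.mem_Ico]
        omega
    _ = ∑ m ∈ Finset.Ico 1 (N+1), ∑ n ∈ Finset.Ico (m+1) (N+1), g n m :=
        (Finset.sum_Ico_Ico_comm' 1 (N+1) fun m n => g n m).symm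
    _ = ∑ m ∈ Finset.Ico 1 (N+1), ∑ n ∈ Finset.Icc (m + 1) N, g n m := by
        refine Finset.sum_congr rfl fun m _ => ?_
        rw [Finset.Ico_add_one_right_eq_Icc]

/-- The key recursive bound. -/
lemma mzvF_le_two : ∀ (l : List ℕ), (∀ t ∈ l, 1 ≤ t) → ∀ (s : ℕ), 2 ≤ s → ∀ N,
    mzvF (s :: l) N ≤ 2 := by
  intro l
  induction l with
  | nil =>
    intro _ s hs N
    rw [mzvF_cons]
    simp only [mzvF, mul_one]
    rcases Nat.eq_zero_or_pos N with rfl | hN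
    · simp
    · rw [show Finset.Icc 1 N = insert 1 (Finset.Icc 2 N) from by
        ext x; simp only [Finset.mem_Icc, Finset.mem_insert]; omega]
      rw [Finset.sum_insert (by simp)]
      have h2 : ∑ n ∈ Finset.Icc 2 N, ((n : ℝ) ^ s)⁻¹ ≤ (1 : ℝ)⁻¹ := by
        have := sum_pow_inv_le 1 s le_rfl hs N
        simpa using this
      simp only [Nat.cast_one, one_pow, inv_one] at h2 ⊢
      linarith
  | cons s' l ih =>
    intro hl s hs N
    have hs' : 1 ≤ s' := hl s' List.mem_cons_self
    have hl' : ∀ t ∈ l, 1 ≤ t := fun t ht => hl t (List.mem_cons_of_mem _ ht)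
    have key : mzvF (s :: s' :: l) N ≤ mzvF ((s' + 1) :: l) N := by
      rw [mzvF_cons, mzvF_cons]
      have expand : ∀ n ∈ Finset.Icc 1 N, ((n:ℝ)^s)⁻¹ * mzvF (s' :: l) (n-1)
          = ∑ m ∈ Finset.Icc 1 (n-1), ((n:ℝ)^s)⁻¹ * (((m:ℝ)^s')⁻¹ * mzvF l (m-1)) := by
        intro n _
        rw [mzvF_cons, Finset.mul_sum]
      rw [Finset.sum_congr rfl expand, sum_swap_tri]
      apply Finset.sum_le_sum
      intro m hm
      have hm1 : 1 ≤ m := (Finset.mem_Icc.mp hm).1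
      rw [← Finset.sum_mul]
      have hC : (0:ℝ) ≤ ((m:ℝ)^s')⁻¹ * mzvF l (m-1) :=
        mul_nonneg (by positivity) (mzvF_nonneg _ _)
      calc (∑ n ∈ Finset.Icc (m+1) N, ((n:ℝ)^s)⁻¹) * (((m:ℝ)^s')⁻¹ * mzvF l (m-1))
          ≤ (m:ℝ)⁻¹ * (((m:ℝ)^s')⁻¹ * mzvF l (m-1)) :=
            mul_le_mul_of_nonneg_right (sum_pow_inv_le m s hm1 hs N) hC
        _ = ((m:ℝ)^(s'+1))⁻¹ * mzvF l (m-1) := by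
            rw [pow_succ, mul_inv]; ring
    exact key.trans (ih hl' (s'+1) (by omega) N)

/-- Any finite partial sum of the MZV series is bounded by the nested finite sum. -/
lemma mzv_partial_le (r : ℕ) : ∀ (s : Fin r → ℕ) (N : ℕ)
    (u : Finset {f : Fin r → ℕ // StrictAnti f ∧ ∀ i, 0 < f i}),
    (∀ x ∈ u, ∀ i, x.1 i ≤ N) →
    ∑ x ∈ u, ∏ i, ((x.1 i : ℝ) ^ s i)⁻¹ ≤ mzvF (List.ofFn s) N := by
  induction r with
  | zero =>
    intro s N u _
    simp only [List.ofFn_zero, Finset.univ_eq_empty, Finset.prod_empty]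
    show ∑ _x ∈ u, (1:ℝ) ≤ mzvF [] N
    rw [Finset.sum_const, nsmul_eq_mul, mul_one]
    show (u.card : ℝ) ≤ 1
    have : u.card ≤ 1 := Finset.card_le_one.mpr fun a _ b _ => Subsingleton.elim a b
    exact_mod_cast this
  | succ r ih =>
    intro s N u hu
    rw [List.ofFn_succ, mzvF_cons]
    have maps : ∀ x ∈ u, x.1 0 ∈ Finset.Icc 1 N := fun x hx =>
      Finset.mem_Icc.mpr ⟨x.2.2 0, hu x hx 0⟩
    rw [← Finset.sum_fiberwise_of_maps_to maps]
    apply Finset.sum_le_sum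
    intro n hn
    have hn1 : 1 ≤ n := (Finset.mem_Icc.mp hn).1
    -- rewrite each term using the head/tail split
    have hterm : ∀ x ∈ u.filter (fun x => x.1 0 = n),
        ∏ i, ((x.1 i : ℝ) ^ s i)⁻¹
          = ((n:ℝ)^ s 0)⁻¹ * ∏ i : Fin r, ((x.1 i.succ : ℝ) ^ s i.succ)⁻¹ := by
      intro x hx
      have hx0 : x.1 0 = n := (Finset.mem_filter.mp hx).2
      rw [Fin.prod_univ_succ, hx0]
    rw [Finset.sum_congr rfl hterm, ← Finset.mul_sum]
    apply mul_le_mul_of_nonneg_left ?_ (by positivity)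
    -- map to the length-r subtype
    set e : {f : Fin (r+1) → ℕ // StrictAnti f ∧ ∀ i, 0 < f i} →
        {f : Fin r → ℕ // StrictAnti f ∧ ∀ i, 0 < f i} :=
      fun x => ⟨fun i => x.1 i.succ,
        fun a b hab => x.2.1 (by exact Fin.succ_lt_succ_iff.mpr hab),
        fun i => x.2.2 i.succ⟩ with he
    have hinj : ∀ x ∈ u.filter (fun x => x.1 0 = n),
        ∀ y ∈ u.filter (fun x => x.1 0 = n), e x = e y → x = y := by
      intro x hx y hy hxy
      have hx0 : x.1 0 = n := (Finset.mem_filter.mp hx).2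
      have hy0 : y.1 0 = n := (Finset.mem_filter.mp hy).2
      have htail : (fun i : Fin r => x.1 i.succ) = fun i : Fin r => y.1 i.succ := by
        exact congrArg Subtype.val hxy
      apply Subtype.ext
      funext i
      refine Fin.cases ?_ ?_ i
      · rw [hx0, hy0]
      · intro j
        exact congrFun htail j
    have himg := Finset.sum_image (s := u.filter fun x => x.1 0 = n) (g := e)
      (f := fun y => ∏ i : Fin r, ((y.1 i : ℝ) ^ s i.succ)⁻¹) (fun x hx y hy hxy => hinj x hx y hy hxy)
    refine le_trans (le_of_eq himg.symm) ?_
    refine ih (fun i => s i.succ) (n - 1) _ ?_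
    intro y hy i
    obtain ⟨x, hx, rfl⟩ := Finset.mem_image.mp hy
    have hx0 : x.1 0 = n := (Finset.mem_filter.mp hx).2
    have hlt : x.1 i.succ < x.1 0 := x.2.1 (Fin.succ_pos i)
    have hei : (e x).1 i = x.1 i.succ := rfl
    omega

/-- Convergent multiple zeta values lie between `0` and `2`. -/
theorem mzv_le_two (r : ℕ) (hr : 0 < r) (s : Fin r → ℕ)
    (h1 : ∀ i, 1 ≤ s i) (h2 : 2 ≤ s ⟨0, hr⟩) :
    0 ≤ ∑' n : {f : Fin r → ℕ // StrictAnti f ∧ ∀ i, 0 < f i},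
          ∏ i, ((n.1 i : ℝ) ^ s i)⁻¹ ∧
    ∑' n : {f : Fin r → ℕ // StrictAnti f ∧ ∀ i, 0 < f i},
          ∏ i, ((n.1 i : ℝ) ^ s i)⁻¹ ≤ 2 := by
  constructor
  · exact tsum_nonneg fun n => Finset.prod_nonneg fun i _ => by positivity
  · apply tsum_le_of_sum_le' (by norm_num)
    intro u
    obtain ⟨r', rfl⟩ : ∃ r', r = r' + 1 := ⟨r - 1, by omega⟩
    have h0 : (⟨0, hr⟩ : Fin (r' + 1)) = 0 := rfl
    rw [h0] at h2
    set N : ℕ := u.sup fun x => x.1 0 with hN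
    have hu : ∀ x ∈ u, ∀ i, x.1 i ≤ N := by
      intro x hx i
      have h1x : x.1 i ≤ x.1 0 := x.2.1.antitone (Fin.zero_le i)
      exact h1x.trans (Finset.le_sup (f := fun x => x.1 0) hx)
    refine (mzv_partial_le (r' + 1) s N u hu).trans ?_
    rw [List.ofFn_succ]
    refine mzvF_le_two _ ?_ (s 0) h2 N
    intro t ht
    obtain ⟨i, rfl⟩ := List.mem_ofFn.mp ht
    exact h1 _
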